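/- Let m ≤ n be positive integers and let B be an m × n matrix with entries in 𝔽q[t], each entry of degree at most 1, whose rank over the fraction field 𝔽q(t) equals m. Let ℓ ≤ n, let π : (𝔽q[t])ⁿ → (𝔽q[t])^ℓ be the projection onto the last ℓ coordinates, and let G := π({x ∈ (𝔽q[t])ⁿ : B·xᵀ = 0}). Then G admits an 𝔽q[t]-basis m₁, …, m_ν with deg_t(m_j) ≤ n for every j. -/

import Mathlib

open Polynomial

namespace ProjKernel

variable {F : Type*} [Field F]

def degV {ℓ : ℕ} (v : Fin ℓ → F[X]) : ℕ :=
  Finset.univ.sup fun c => (v c).natDegree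

lemma natDegree_le_degV {ℓ : ℕ} (v : Fin ℓ → F[X]) (c : Fin ℓ) :
    (v c).natDegree ≤ degV v := by
  unfold degV; exact Finset.le_sup (f := fun c => (v c).natDegree) (Finset.mem_univ c)

lemma degV_le {ℓ : ℕ} {v : Fin ℓ → F[X]} {D : ℕ} (h : ∀ c, (v c).natDegree ≤ D) : degV v ≤ D := by
  unfold degV; exact Finset.sup_le fun c _ => h c

open scoped Classical in
noncomputable def wt {ℓ : ℕ} (v : Fin ℓ → F[X]) : ℕ :=
  if v = 0 then 0 else degV v + 1

lemma wt_zero {ℓ : ℕ} : wt (0 : Fin ℓ → F[X]) = 0 := by simp [wt]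

lemma wt_of_ne {ℓ : ℕ} {v : Fin ℓ → F[X]} (h : v ≠ 0) : wt v = degV v + 1 := by
  simp [wt, h]

lemma eq_zero_of_wt_eq_zero {ℓ : ℕ} {v : Fin ℓ → F[X]} (h : wt v = 0) : v = 0 := by
  by_contra hv
  rw [wt_of_ne hv] at h
  omega

lemma eq_zero_or_natDegree_lt {p : F[X]} {d : ℕ} (h1 : p.natDegree ≤ d) (h2 : p.coeff d = 0) :
    p = 0 ∨ p.natDegree + 1 ≤ d := by
  by_cases hp : p = 0
  · exact Or.inl hp
  · right
    rcases lt_or_eq_of_le h1 with h | h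
    · omega
    · exfalso
      have : p.leadingCoeff = 0 := by rw [leadingCoeff, h]; exact h2
      exact hp (leadingCoeff_eq_zero.mp this)

theorem bounded_basis_aux {ℓ D : ℕ} (W : ℕ) :
    ∀ (k : ℕ) (G : Submodule F[X] (Fin ℓ → F[X])) (R : Fin k → Fin ℓ → F[X]),
      (∀ i c, (R i c).natDegree ≤ D) →
      Submodule.span F[X] (Set.range R) = G →
      (∑ i, wt (R i)) ≤ W →
      ∃ (ν : ℕ) (b : Module.Basis (Fin ν) F[X] G),
        ∀ j c, ((b j : Fin ℓ → F[X]) c).natDegree ≤ D := by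
  induction W with
  | zero =>
    intro k G R hdeg hspan hW
    have hR0 : ∀ i, R i = 0 := by
      intro i
      refine eq_zero_of_wt_eq_zero ?_
      have := Finset.sum_eq_zero_iff.mp (Nat.le_zero.mp hW)
      exact this i (Finset.mem_univ i)
    have hGbot : G = ⊥ := by
      rw [← hspan, Submodule.span_eq_bot]
      rintro v ⟨i, rfl⟩; exact hR0 i
    subst hGbot
    exact ⟨0, Module.Basis.empty _, fun j => j.elim0⟩
  | succ W ihW =>
    intro k
    induction k with
    | zero =>
      intro G R hdeg hspan hW
      have hGbot : G = ⊥ := by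
        rw [← hspan, Set.range_eq_empty R, Submodule.span_empty]
      subst hGbot
      exact ⟨0, Module.Basis.empty _, fun j => j.elim0⟩
    | succ k ihk =>
      intro G R hdeg hspan hW
      classical
      by_cases hz : ∃ i, R i = 0
      · obtain ⟨i, hi⟩ := hz
        refine ihk G (R ∘ i.succAbove) (fun j c => hdeg _ c) ?_ ?_
        · rw [← hspan]
          apply le_antisymm
          · apply Submodule.span_mono
            rintro v ⟨j, rfl⟩; exact ⟨i.succAbove j, rfl⟩
          · rw [Submodule.span_le]
            rintro v ⟨j, rfl⟩
            rcases eq_or_ne j i with rfl | hne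
            · rw [hi]; exact Submodule.zero_mem _
            · obtain ⟨j', hj'⟩ := Fin.exists_succAbove_eq (x := j) (y := i) hne
              exact Submodule.subset_span ⟨j', by rw [Function.comp_apply, hj']⟩
        · calc ∑ j, wt ((R ∘ i.succAbove) j) = ∑ j : Fin k, wt (R (i.succAbove j)) := rfl
            _ ≤ wt (R i) + ∑ j : Fin k, wt (R (i.succAbove j)) := le_add_self
            _ = ∑ i', wt (R i') := (Fin.sum_univ_succAbove (fun i' => wt (R i')) i).symm
            _ ≤ W + 1 := hW
      · push_neg at hz
        by_cases hind : LinearIndependent F[X] R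
        · refine ⟨k + 1, (Module.Basis.span hind).map (LinearEquiv.ofEq _ _ hspan), ?_⟩
          intro j c
          have hco : (((Module.Basis.span hind).map (LinearEquiv.ofEq _ _ hspan)) j :
              Fin ℓ → F[X]) = R j := by
            simp [Module.Basis.map_apply, Module.Basis.span_apply]
          rw [hco]; exact hdeg j c
        · obtain ⟨g, hgsum, i₁, hgi₁⟩ := Fintype.not_linearIndependent_iff.mp hind
          set S : Finset (Fin (k + 1)) := Finset.univ.filter (fun i => g i ≠ 0) with hS
          have hi₁S : i₁ ∈ S := by simp [hS, hgi₁]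
          set Mdeg : ℕ := S.sup (fun i => (g i).natDegree + degV (R i)) with hM
          set T : Finset (Fin (k + 1)) :=
            S.filter (fun i => (g i).natDegree + degV (R i) = Mdeg) with hT
          have hTne : T.Nonempty := by
            obtain ⟨iM, hiMS, hiM⟩ := Finset.exists_mem_eq_sup S ⟨i₁, hi₁S⟩
              (fun i => (g i).natDegree + degV (R i))
            exact ⟨iM, by simp only [hT, Finset.mem_filter]; exact ⟨hiMS, hiM.symm⟩⟩
          obtain ⟨i0, hi0T, hd0⟩ := Finset.exists_mem_eq_sup T hTne (fun i => degV (R i))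
          have hd0max : ∀ i ∈ T, degV (R i) ≤ degV (R i0) := fun i hi =>
            hd0 ▸ Finset.le_sup (f := fun i => degV (R i)) hi
          have hgT : ∀ i ∈ T, g i ≠ 0 := by
            intro i hi
            rw [hT, Finset.mem_filter] at hi
            have := hi.1
            rw [hS, Finset.mem_filter] at this
            exact this.2
          have hMT : ∀ i ∈ T, (g i).natDegree + degV (R i) = Mdeg := by
            intro i hi
            rw [hT, Finset.mem_filter] at hi
            exact hi.2
          have hgi0 : g i0 ≠ 0 := hgT i0 hi0T
          -- key relation between leading coefficients
          have key : ∀ c, (∑ i ∈ T, (g i).leadingCoeff * (R i c).coeff (degV (R i))) = 0 := by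
            intro c
            have h1 : (∑ i, g i * R i c) = 0 := by
              have := congrFun hgsum c
              simpa [Finset.sum_apply, Pi.smul_apply, smul_eq_mul] using this
            have h2 : (∑ i, (g i * R i c).coeff Mdeg) = 0 := by
              rw [← finset_sum_coeff, h1, coeff_zero]
            have h3 : (∑ i ∈ T, (g i * R i c).coeff Mdeg) = 0 := by
              rw [← h2]
              apply Finset.sum_subset (T.subset_univ)
              intro i _ hiT
              by_cases hiS : i ∈ S
              · have hlt : (g i).natDegree + degV (R i) < Mdeg := by
                  refine lt_of_le_of_ne (Finset.le_sup (f := fun i => (g i).natDegree + degV (R i)) hiS) ?_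
                  intro he
                  exact hiT (by rw [hT, Finset.mem_filter]; exact ⟨hiS, he⟩)
                apply coeff_eq_zero_of_natDegree_lt
                calc (g i * R i c).natDegree ≤ (g i).natDegree + (R i c).natDegree :=
                      natDegree_mul_le
                  _ ≤ (g i).natDegree + degV (R i) := by
                      exact Nat.add_le_add_left (natDegree_le_degV _ _) _
                  _ < Mdeg := hlt
              · have : g i = 0 := by
                  by_contra hgi
                  exact hiS (by rw [hS, Finset.mem_filter]; exact ⟨Finset.mem_univ i, hgi⟩)
                simp [this]
            rw [← h3]
            apply Finset.sum_congr rfl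
            intro i hi
            rw [← hMT i hi, coeff_mul_add_eq_of_natDegree_le le_rfl (natDegree_le_degV _ _)]
            rfl
          -- the new row
          set q : Fin (k + 1) → F[X] := fun i =>
            C ((g i).leadingCoeff / (g i0).leadingCoeff) * X ^ (degV (R i0) - degV (R i)) with hq
          set newr : Fin ℓ → F[X] := ∑ i ∈ T, q i • R i with hnewr
          have hnewrc : ∀ c, newr c = ∑ i ∈ T, q i * R i c := by
            intro c
            rw [hnewr]
            simp [Finset.sum_apply, Pi.smul_apply, smul_eq_mul]
          have hdeg_new : ∀ c, (newr c).natDegree ≤ degV (R i0) := by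
            intro c
            rw [hnewrc]
            apply natDegree_sum_le_of_forall_le
            intro i hi
            calc (q i * R i c).natDegree ≤ (q i).natDegree + (R i c).natDegree :=
                  natDegree_mul_le
              _ ≤ (degV (R i0) - degV (R i)) + degV (R i) := by
                  refine Nat.add_le_add ?_ (natDegree_le_degV _ _)
                  rw [hq]
                  calc (C ((g i).leadingCoeff / (g i0).leadingCoeff) *
                        X ^ (degV (R i0) - degV (R i))).natDegree
                      ≤ (C ((g i).leadingCoeff / (g i0).leadingCoeff)).natDegree +
                        (X ^ (degV (R i0) - degV (R i)) : F[X]).natDegree := natDegree_mul_le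
                    _ ≤ degV (R i0) - degV (R i) := by
                        rw [natDegree_C, natDegree_X_pow]; omega
              _ ≤ degV (R i0) := by have := hd0max i hi; omega
          have hcoeff_new : ∀ c, (newr c).coeff (degV (R i0)) = 0 := by
            intro c
            rw [hnewrc, finset_sum_coeff]
            have hterm : ∀ i ∈ T, (q i * R i c).coeff (degV (R i0)) =
                ((g i).leadingCoeff * (R i c).coeff (degV (R i))) * ((g i0).leadingCoeff)⁻¹ := by
              intro i hi
              rw [hq]
              rw [mul_assoc, coeff_C_mul]
              have hcx : (X ^ (degV (R i0) - degV (R i)) * R i c).coeff (degV (R i0)) =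
                  (R i c).coeff (degV (R i)) := by
                set δ : ℕ := degV (R i0) - degV (R i) with hδ
                have hle := hd0max i hi
                rw [show degV (R i0) = degV (R i) + δ from by omega, coeff_X_pow_mul]
              rw [hcx, div_eq_mul_inv]
              ring
            rw [Finset.sum_congr rfl hterm, ← Finset.sum_mul, key c, zero_mul]
          have hqi0 : q i0 = 1 := by
            rw [hq]
            simp [div_self (leadingCoeff_ne_zero.mpr hgi0)]
          set R' : Fin (k + 1) → Fin ℓ → F[X] := Function.update R i0 newr with hR'
          have hspan' : Submodule.span F[X] (Set.range R') = G := by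
            rw [← hspan]
            apply le_antisymm
            · rw [Submodule.span_le]
              rintro v ⟨j, rfl⟩
              rcases eq_or_ne j i0 with heq | hne
              · rw [hR', heq, Function.update_self, hnewr]
                exact Submodule.sum_mem _ fun i _ =>
                  Submodule.smul_mem _ _ (Submodule.subset_span ⟨i, rfl⟩)
              · rw [hR', Function.update_of_ne hne]
                exact Submodule.subset_span ⟨j, rfl⟩
            · rw [Submodule.span_le]
              rintro v ⟨j, rfl⟩
              rcases eq_or_ne j i0 with heq | hne
              · rw [heq]
                have hdecomp : R i0 = R' i0 - ∑ i ∈ T.erase i0, q i • R' i := by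
                    have h1 : R' i0 = R i0 + ∑ i ∈ T.erase i0, q i • R i := by
                      rw [hR', Function.update_self, hnewr,
                        ← Finset.add_sum_erase _ _ hi0T, hqi0, one_smul]
                    have h2 : (∑ i ∈ T.erase i0, q i • R' i) = ∑ i ∈ T.erase i0, q i • R i := by
                      apply Finset.sum_congr rfl
                      intro i hi
                      rw [hR', Function.update_of_ne (Finset.ne_of_mem_erase hi)]
                    rw [h2, h1]
                    abel
                rw [hdecomp]
                exact Submodule.sub_mem _ (Submodule.subset_span ⟨i0, rfl⟩)
                  (Submodule.sum_mem _ fun i _ =>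
                    Submodule.smul_mem _ _ (Submodule.subset_span ⟨i, rfl⟩))
              · exact Submodule.subset_span ⟨j, by rw [hR', Function.update_of_ne hne]⟩
          have hwt_new : wt newr < wt (R i0) := by
            have h1 : wt (R i0) = degV (R i0) + 1 := wt_of_ne (hz i0)
            have h2 : wt newr ≤ degV (R i0) := by
              by_cases h : newr = 0
              · rw [h, wt_zero]; exact Nat.zero_le _
              · rw [wt_of_ne h]
                obtain ⟨c0, hc0⟩ : ∃ c, newr c ≠ 0 := by
                  by_contra hcc
                  push_neg at hcc
                  exact h (funext hcc)
                have hd1 : 1 ≤ degV (R i0) := by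
                  rcases eq_zero_or_natDegree_lt (hdeg_new c0) (hcoeff_new c0) with h' | h'
                  · exact absurd h' hc0
                  · omega
                have : degV newr ≤ degV (R i0) - 1 := by
                  apply degV_le
                  intro c
                  rcases eq_zero_or_natDegree_lt (hdeg_new c) (hcoeff_new c) with h' | h'
                  · rw [h', natDegree_zero]; omega
                  · omega
                omega
            omega
          have hW' : (∑ i, wt (R' i)) ≤ W := by
            have e1 : (∑ i, wt (R' i)) = wt (R' i0) + ∑ i ∈ Finset.univ.erase i0, wt (R' i) :=
              (Finset.add_sum_erase _ _ (Finset.mem_univ i0)).symm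
            have e1' : (∑ i ∈ Finset.univ.erase i0, wt (R' i)) =
                ∑ i ∈ Finset.univ.erase i0, wt (R i) := by
              apply Finset.sum_congr rfl
              intro i hi
              rw [hR', Function.update_of_ne (Finset.ne_of_mem_erase hi)]
            have e2 : (∑ i, wt (R i)) = wt (R i0) + ∑ i ∈ Finset.univ.erase i0, wt (R i) :=
              (Finset.add_sum_erase _ _ (Finset.mem_univ i0)).symm
            have hR'i0 : wt (R' i0) = wt newr := by rw [hR', Function.update_self]
            rw [e1, e1', hR'i0]
            rw [e2] at hW
            omega
          refine ihW (k + 1) G R' ?_ hspan' hW'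
          intro i c
          rcases eq_or_ne i i0 with heq | hne
          · rw [hR', heq, Function.update_self]
            exact (hdeg_new c).trans (degV_le (hdeg i0))
          · rw [hR', Function.update_of_ne hne]
            exact hdeg i c



variable {F : Type*} [Field F]

lemma coeff_mul_succ_of_natDegree_le_one {p : F[X]} (hp : p.natDegree ≤ 1) (q : F[X]) (k : ℕ) :
    (p * q).coeff (k + 1) = p.coeff 0 * q.coeff (k + 1) + p.coeff 1 * q.coeff k := by
  conv_lhs => rw [eq_X_add_C_of_natDegree_le_one hp]
  rw [add_mul, coeff_add, mul_assoc, coeff_C_mul, coeff_X_mul, coeff_C_mul]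
  ring

theorem ker_span_bounded {mm nn : ℕ} (B : Matrix (Fin mm) (Fin nn) F[X])
    (hdeg : ∀ i j, (B i j).natDegree ≤ 1) (x : Fin nn → F[X]) (hx : B.mulVec x = 0) :
    x ∈ Submodule.span F[X] {z : Fin nn → F[X] | B.mulVec z = 0 ∧ ∀ j, (z j).natDegree ≤ nn} := by
  classical
  set B0 : Matrix (Fin mm) (Fin nn) F := fun i j => (B i j).coeff 0 with hB0
  set B1 : Matrix (Fin mm) (Fin nn) F := fun i j => (B i j).coeff 1 with hB1
  -- coefficient characterization of the kernel
  have hc0 : ∀ (z : Fin nn → F[X]) (i : Fin mm),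
      ((B.mulVec z) i).coeff 0 = B0.mulVec (fun j => (z j).coeff 0) i := by
    intro z i
    simp only [Matrix.mulVec, dotProduct, finset_sum_coeff, mul_coeff_zero, hB0]
  have hcs : ∀ (z : Fin nn → F[X]) (i : Fin mm) (k : ℕ),
      ((B.mulVec z) i).coeff (k + 1) =
        B0.mulVec (fun j => (z j).coeff (k + 1)) i + B1.mulVec (fun j => (z j).coeff k) i := by
    intro z i k
    simp only [Matrix.mulVec, dotProduct, finset_sum_coeff, hB0, hB1]
    rw [← Finset.sum_add_distrib]
    apply Finset.sum_congr rfl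
    intro j _
    exact coeff_mul_succ_of_natDegree_le_one (hdeg i j) (z j) k
  have hiff : ∀ z : Fin nn → F[X], B.mulVec z = 0 ↔
      (B0.mulVec (fun j => (z j).coeff 0) = 0 ∧
        ∀ k, B0.mulVec (fun j => (z j).coeff (k + 1)) + B1.mulVec (fun j => (z j).coeff k) = 0) := by
    intro z
    constructor
    · intro hz
      constructor
      · funext i
        rw [Pi.zero_apply, ← hc0 z i, hz, Pi.zero_apply, coeff_zero]
      · intro k
        funext i
        rw [Pi.zero_apply, Pi.add_apply, ← hcs z i k, hz, Pi.zero_apply, coeff_zero]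
    · rintro ⟨h0, hs⟩
      funext i
      rw [Pi.zero_apply]
      apply Polynomial.ext
      intro d
      rw [coeff_zero]
      cases d with
      | zero => rw [hc0 z i, h0, Pi.zero_apply]
      | succ k =>
        rw [hcs z i k]
        have := congrFun (hs k) i
        rw [Pi.zero_apply, Pi.add_apply] at this
        exact this
  -- the chain of coefficient subspaces
  set step : Submodule F (Fin nn → F) → Submodule F (Fin nn → F) :=
    fun U => Submodule.comap B0.mulVecLin (Submodule.map (-B1).mulVecLin U) with hstepdef
  set Sq : ℕ → Submodule F (Fin nn → F) := fun k => step^[k] ⊥ with hSqdef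
  have hSqzero : Sq 0 = ⊥ := rfl
  have hSqsucc : ∀ k, Sq (k + 1) = step (Sq k) := fun k =>
    Function.iterate_succ_apply' step k ⊥
  have hmem_step : ∀ (U : Submodule F (Fin nn → F)) (v : Fin nn → F),
      v ∈ step U ↔ ∃ u ∈ U, B0.mulVec v + B1.mulVec u = 0 := by
    intro U v
    rw [hstepdef]
    simp only [Submodule.mem_comap, Submodule.mem_map, Matrix.mulVecLin_apply]
    constructor
    · rintro ⟨u, hu, heq⟩
      refine ⟨u, hu, ?_⟩
      rw [← heq, Matrix.neg_mulVec]
      simp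
    · rintro ⟨u, hu, heq⟩
      refine ⟨u, hu, ?_⟩
      rw [Matrix.neg_mulVec]
      exact neg_eq_of_add_eq_zero_right (by rw [add_comm] at heq; exact heq)
  have hstep_mono : ∀ U V : Submodule F (Fin nn → F), U ≤ V → step U ≤ step V := by
    intro U V h
    rw [hstepdef]
    exact Submodule.comap_mono (Submodule.map_mono h)
  have hSq_mono : ∀ k, Sq k ≤ Sq (k + 1) := by
    intro k
    induction k with
    | zero => rw [hSqzero]; exact bot_le
    | succ k ih => rw [hSqsucc, hSqsucc]; exact hstep_mono _ _ ih
  have hSq_stab : ∀ d, nn ≤ d → Sq d = Sq nn := by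
    have hex : ∃ k, k ≤ nn ∧ Sq k = Sq (k + 1) := by
      by_contra hcon
      push_neg at hcon
      have hgrow : ∀ k, k ≤ nn + 1 → k ≤ Module.finrank F (Sq k) := by
        intro k
        induction k with
        | zero => intro _; exact Nat.zero_le _
        | succ k ih =>
          intro hk
          have h1 : Sq k < Sq (k + 1) :=
            lt_of_le_of_ne (hSq_mono k) (hcon k (by omega))
          have h2 : Module.finrank F (Sq k) < Module.finrank F (Sq (k + 1)) :=
            Submodule.finrank_lt_finrank_of_lt h1
          have := ih (by omega)
          omega
      have h1 := hgrow (nn + 1) le_rfl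
      have h2 : Module.finrank F (Sq (nn + 1)) ≤ Module.finrank F (Fin nn → F) :=
        Submodule.finrank_le _
      rw [Module.finrank_fin_fun] at h2
      omega
    obtain ⟨k0, hk0, hfix⟩ := hex
    have hfrom : ∀ j, k0 ≤ j → Sq j = Sq k0 := by
      intro j
      induction j with
      | zero => intro h; rw [Nat.le_zero.mp h]
      | succ j ih =>
        intro hj
        rcases Nat.lt_or_ge k0 (j + 1) with h | h
        · have hj' : k0 ≤ j := by omega
          calc Sq (j + 1) = step (Sq j) := hSqsucc j
            _ = step (Sq k0) := by rw [ih hj']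
            _ = Sq (k0 + 1) := (hSqsucc k0).symm
            _ = Sq k0 := hfix.symm
        · have : k0 = j + 1 := by omega
          rw [this]
    intro d hd
    exact (hfrom d (hk0.trans hd)).trans (hfrom nn hk0).symm
  -- chain membership for solutions
  have hchain : ∀ z : Fin nn → F[X], B.mulVec z = 0 →
      ∀ k, (fun j => (z j).coeff k) ∈ Sq (k + 1) := by
    intro z hz
    obtain ⟨h0, hs⟩ := (hiff z).mp hz
    intro k
    induction k with
    | zero =>
      rw [hSqsucc 0, hmem_step]
      exact ⟨0, Submodule.zero_mem _, by rw [Matrix.mulVec_zero, h0, add_zero]⟩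
    | succ k ih =>
      rw [hSqsucc, hmem_step]
      exact ⟨_, ih, hs k⟩
  -- realization of chain elements as bounded-degree partial solutions
  have hreal : ∀ d, ∀ v ∈ Sq (d + 1), ∃ z : Fin nn → F[X],
      (∀ j, (z j).natDegree ≤ d) ∧ (fun j => (z j).coeff d) = v ∧
      (B0.mulVec (fun j => (z j).coeff 0) = 0 ∧
        ∀ k < d, B0.mulVec (fun j => (z j).coeff (k + 1)) + B1.mulVec (fun j => (z j).coeff k) = 0) := by
    intro d
    induction d with
    | zero =>
      intro v hv
      rw [hSqsucc 0, hmem_step] at hv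
      obtain ⟨u, hu, hequ⟩ := hv
      rw [hSqzero, Submodule.mem_bot] at hu
      refine ⟨fun j => C (v j), fun j => (natDegree_C _).le, ?_, ?_, ?_⟩
      · funext j; simp
      · have hB0v : B0.mulVec v = 0 := by
          rw [hu, Matrix.mulVec_zero, add_zero] at hequ
          exact hequ
        have : (fun j => (C (v j) : F[X]).coeff 0) = v := by funext j; simp
        rw [this, hB0v]
      · intro k hk; exact absurd hk (Nat.not_lt_zero k)
    | succ d ih =>
      intro v hv
      rw [hSqsucc, hmem_step] at hv
      obtain ⟨u, hu, hequ⟩ := hv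
      obtain ⟨z', hz'deg, hz'top, hz'0, hz's⟩ := ih u hu
      set z : Fin nn → F[X] := fun j => z' j + C (v j) * X ^ (d + 1) with hzdef
      have hcoeff_le : ∀ j (e : ℕ), e ≤ d → (z j).coeff e = (z' j).coeff e := by
        intro j e he
        rw [hzdef]
        simp only [coeff_add, coeff_C_mul, coeff_X_pow]
        rw [if_neg (by omega), mul_zero, add_zero]
      have hcoeff_top : (fun j => (z j).coeff (d + 1)) = v := by
        funext j
        have h0 : (z' j).coeff (d + 1) = 0 :=
          coeff_eq_zero_of_natDegree_lt (lt_of_le_of_lt (hz'deg j) (by omega))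
        simp [hzdef, coeff_X_pow, h0]
      refine ⟨z, ?_, hcoeff_top, ?_, ?_⟩
      · intro j
        rw [hzdef]
        apply le_trans (natDegree_add_le _ _)
        rw [max_le_iff]
        constructor
        · exact (hz'deg j).trans (by omega)
        · apply le_trans natDegree_mul_le
          rw [natDegree_C, natDegree_X_pow]
          omega
      · have : (fun j => (z j).coeff 0) = fun j => (z' j).coeff 0 := by
          funext j; exact hcoeff_le j 0 (by omega)
        rw [this, hz'0]
      · intro k hk
        rcases Nat.lt_or_ge k d with h | h
        · have e1 : (fun j => (z j).coeff (k + 1)) = fun j => (z' j).coeff (k + 1) := by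
            funext j; exact hcoeff_le j (k + 1) (by omega)
          have e2 : (fun j => (z j).coeff k) = fun j => (z' j).coeff k := by
            funext j; exact hcoeff_le j k (by omega)
          rw [e1, e2]
          exact hz's k h
        · have hkd : k = d := by omega
          subst hkd
          have e2 : (fun j => (z j).coeff k) = fun j => (z' j).coeff k := by
            funext j; exact hcoeff_le j k le_rfl
          rw [hcoeff_top, e2, hz'top]
          exact hequ
  -- realization as genuine bounded solutions
  have hreal' : ∀ v, v ∈ Sq (nn + 1) → B1.mulVec v = 0 →
      ∃ z : Fin nn → F[X], B.mulVec z = 0 ∧ (∀ j, (z j).natDegree ≤ nn) ∧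
        (fun j => (z j).coeff nn) = v := by
    intro v hv hv1
    obtain ⟨z, hzdeg, hztop, hz0, hzs⟩ := hreal nn v hv
    refine ⟨z, ?_, hzdeg, hztop⟩
    rw [hiff z]
    refine ⟨hz0, ?_⟩
    intro k
    rcases Nat.lt_or_ge k nn with h | h
    · exact hzs k h
    · have hz1 : (fun j => (z j).coeff (k + 1)) = (0 : Fin nn → F) := by
        funext j
        exact coeff_eq_zero_of_natDegree_lt (lt_of_le_of_lt (hzdeg j) (by omega))
      rw [hz1, Matrix.mulVec_zero, zero_add]
      rcases eq_or_lt_of_le h with heq | hlt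
      · subst heq
        rw [hztop, hv1]
      · have hz2 : (fun j => (z j).coeff k) = (0 : Fin nn → F) := by
          funext j
          exact coeff_eq_zero_of_natDegree_lt (lt_of_le_of_lt (hzdeg j) (by omega))
        rw [hz2, Matrix.mulVec_zero]
  -- main generation argument
  have main : ∀ d (z : Fin nn → F[X]), B.mulVec z = 0 →
      (∀ j (e : ℕ), d ≤ e → (z j).coeff e = 0) →
      z ∈ Submodule.span F[X] {z : Fin nn → F[X] | B.mulVec z = 0 ∧ ∀ j, (z j).natDegree ≤ nn} := by
    intro d
    induction d with
    | zero =>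
      intro z _ hcoeff
      have : z = 0 := by
        funext j
        apply Polynomial.ext
        intro e
        rw [hcoeff j e (Nat.zero_le e)]
        simp
      rw [this]
      exact Submodule.zero_mem _
    | succ d ihd =>
      intro z hz hcoeff
      have hdeg' : ∀ j, (z j).natDegree ≤ d := by
        intro j
        apply natDegree_le_iff_coeff_eq_zero.mpr
        intro e he
        exact hcoeff j e (by omega)
      rcases Nat.lt_or_ge d (nn + 1) with h | h
      · exact Submodule.subset_span ⟨hz, fun j => (hdeg' j).trans (by omega)⟩
      · set v : Fin nn → F := fun j => (z j).coeff d with hvdef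
        have hvS : v ∈ Sq (d + 1) := hchain z hz d
        have hvS' : v ∈ Sq (nn + 1) := by
          rw [hSq_stab (d + 1) (by omega)] at hvS
          rw [hSq_stab (nn + 1) (by omega)]
          exact hvS
        have hv1 : B1.mulVec v = 0 := by
          obtain ⟨h0, hs⟩ := (hiff z).mp hz
          have h1 := hs d
          have h2 : (fun j => (z j).coeff (d + 1)) = (0 : Fin nn → F) := by
            funext j; exact hcoeff j (d + 1) le_rfl
          rw [h2, Matrix.mulVec_zero, zero_add] at h1
          exact h1
        obtain ⟨z0, hz0B, hz0deg, hz0top⟩ := hreal' v hvS' hv1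
        set z1 : Fin nn → F[X] := z - (X : F[X]) ^ (d - nn) • z0 with hz1def
        have hz1B : B.mulVec z1 = 0 := by
          rw [hz1def, Matrix.mulVec_sub, Matrix.mulVec_smul, hz, hz0B, smul_zero, sub_zero]
        have hz1coeff : ∀ j (e : ℕ), d ≤ e → (z1 j).coeff e = 0 := by
          intro j e he
          rw [hz1def]
          simp only [Pi.sub_apply, Pi.smul_apply, smul_eq_mul, coeff_sub]
          have hX : ((X : F[X]) ^ (d - nn) * z0 j).coeff e = (z0 j).coeff (e - (d - nn)) := by
            set δ : ℕ := d - nn with hδ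
            rw [show e = (e - δ) + δ from by omega, coeff_X_pow_mul]
            congr 1
            omega
          rw [hX]
          rcases eq_or_lt_of_le he with heq | hlt
          · rw [← heq]
            have e1 : d - (d - nn) = nn := by omega
            rw [e1, congrFun hz0top j, hvdef, sub_self]
          · rw [hcoeff j e (by omega),
              coeff_eq_zero_of_natDegree_lt (lt_of_le_of_lt (hz0deg j) (by omega)), sub_self]
        have hz1span := ihd z1 hz1B hz1coeff
        have hzdecomp : z = z1 + (X : F[X]) ^ (d - nn) • z0 := by
          rw [hz1def]; abel
        rw [hzdecomp]
        exact Submodule.add_mem _ hz1span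
          (Submodule.smul_mem _ _ (Submodule.subset_span ⟨hz0B, hz0deg⟩))
  exact main ((Finset.univ.sup fun j => (x j).natDegree) + 1) x hx
    (fun j e he => coeff_eq_zero_of_natDegree_lt
      (lt_of_le_of_lt (Finset.le_sup (f := fun j => (x j).natDegree) (Finset.mem_univ j)) (by omega)))

end ProjKernel

/-- Assembly of the proof of the main theorem (Section 3.3 of the paper). Let
`B` be an `m × n` matrix over `𝔽q[t]` with entries of degree at most `1` and of
full rank `m` over `𝔽q(t)`, and let `G ⊆ (𝔽q[t])^ℓ` be the projection of the
kernel `{x ∈ (𝔽q[t])^n : Bxᵀ = 0}` onto the last `ℓ` coordinates. Then `G`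
admits an `𝔽q[t]`-basis whose elements have degree at most `n`. -/
theorem projected_kernel_bounded_degree_basis
    (Fq : Type*) [Field Fq] [Fintype Fq]
    (m n ℓ : ℕ) (hm : 0 < m) (hmn : m ≤ n) (hℓ : ℓ ≤ n)
    (B : Matrix (Fin m) (Fin n) (Polynomial Fq))
    (hdeg : ∀ i j, (B i j).natDegree ≤ 1)
    (hrank : (B.map fun b => algebraMap (Polynomial Fq) (RatFunc Fq) b).rank = m)
    (G : Submodule (Polynomial Fq) (Fin ℓ → Polynomial Fq))
    (hG : ∀ y : Fin ℓ → Polynomial Fq, y ∈ G ↔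
      ∃ x : Fin n → Polynomial Fq, B.mulVec x = 0 ∧
        ∀ i : Fin ℓ, y i = x ⟨n - ℓ + i.1, by have := i.2; omega⟩) :
    ∃ (ν : ℕ) (mb : Module.Basis (Fin ν) (Polynomial Fq) G),
      ∀ j c, (((mb j : Fin ℓ → Polynomial Fq)) c).natDegree ≤ n := by
  classical
  set emb : Fin ℓ → Fin n := fun i => ⟨n - ℓ + i.1, by have := i.2; omega⟩ with hemb
  set π : (Fin n → Polynomial Fq) →ₗ[Polynomial Fq] (Fin ℓ → Polynomial Fq) :=
    LinearMap.funLeft (Polynomial Fq) (Polynomial Fq) emb with hπ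
  set 𝒮 : Set (Fin n → Polynomial Fq) :=
    {z | B.mulVec z = 0 ∧ ∀ j, (z j).natDegree ≤ n} with hSdef
  have hKspan : LinearMap.ker B.mulVecLin = Submodule.span (Polynomial Fq) 𝒮 := by
    apply le_antisymm
    · intro x hx
      rw [LinearMap.mem_ker, Matrix.mulVecLin_apply] at hx
      exact ProjKernel.ker_span_bounded B hdeg x hx
    · rw [Submodule.span_le]
      rintro z ⟨hz, -⟩
      rw [SetLike.mem_coe, LinearMap.mem_ker, Matrix.mulVecLin_apply]
      exact hz
  have hGmap : G = Submodule.map π (LinearMap.ker B.mulVecLin) := by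
    ext y
    rw [hG y, Submodule.mem_map]
    constructor
    · rintro ⟨x, hx, hy⟩
      refine ⟨x, ?_, ?_⟩
      · rw [LinearMap.mem_ker, Matrix.mulVecLin_apply]; exact hx
      · funext i
        rw [hπ, LinearMap.funLeft_apply]
        exact (hy i).symm
    · rintro ⟨x, hx, rfl⟩
      rw [LinearMap.mem_ker, Matrix.mulVecLin_apply] at hx
      refine ⟨x, hx, ?_⟩
      intro i
      rw [hπ, LinearMap.funLeft_apply]
  have hGspan : G = Submodule.span (Polynomial Fq) (π '' 𝒮) := by
    rw [hGmap, hKspan, Submodule.map_span]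
  have hbound : ∀ y ∈ π '' 𝒮, ∀ c, (y c).natDegree ≤ n := by
    rintro y ⟨z, hz, rfl⟩ c
    rw [hπ, LinearMap.funLeft_apply]
    exact hz.2 (emb c)
  -- extract a finite generating subset of π '' 𝒮
  have hfg : G.FG := IsNoetherian.noetherian G
  obtain ⟨Gen, hGenspan⟩ := hfg
  have hmem : ∀ y : Fin ℓ → Polynomial Fq, y ∈ Gen →
      ∃ Ty : Finset (Fin ℓ → Polynomial Fq), ↑Ty ⊆ π '' 𝒮 ∧
        y ∈ Submodule.span (Polynomial Fq) (Ty : Set (Fin ℓ → Polynomial Fq)) := by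
    intro y hy
    apply Submodule.mem_span_finite_of_mem_span
    rw [← hGspan]
    rw [← hGenspan]
    exact Submodule.subset_span hy
  choose Ty hTy1 hTy2 using hmem
  set T : Finset (Fin ℓ → Polynomial Fq) := Gen.attach.biUnion (fun y => Ty y.1 y.2) with hT
  have hT_sub : ↑T ⊆ π '' 𝒮 := by
    intro v hv
    rw [hT] at hv
    simp only [Finset.coe_biUnion, Set.mem_iUnion] at hv
    obtain ⟨y, -, hy2⟩ := hv
    exact hTy1 y.1 y.2 hy2
  have hT_span : Submodule.span (Polynomial Fq) (T : Set (Fin ℓ → Polynomial Fq)) = G := by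
    apply le_antisymm
    · rw [Submodule.span_le]
      intro v hv
      rw [SetLike.mem_coe, hGspan]
      exact Submodule.subset_span (hT_sub hv)
    · rw [← hGenspan, Submodule.span_le]
      intro y hy
      rw [SetLike.mem_coe]
      refine Submodule.span_mono ?_ (hTy2 y hy)
      intro v hv
      rw [hT]
      simp only [Finset.coe_biUnion, Set.mem_iUnion]
      exact ⟨⟨y, hy⟩, Finset.mem_attach _ _, hv⟩
  -- enumerate T
  set k : ℕ := T.card with hk
  set Rfam : Fin k → (Fin ℓ → Polynomial Fq) := fun i => (T.equivFin.symm i : Fin ℓ → Polynomial Fq)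
    with hRfam
  have hrange : Set.range Rfam = (T : Set (Fin ℓ → Polynomial Fq)) := by
    ext v
    constructor
    · rintro ⟨i, rfl⟩
      exact (T.equivFin.symm i).2
    · intro hv
      exact ⟨T.equivFin ⟨v, hv⟩, by rw [hRfam]; simp⟩
  exact ProjKernel.bounded_basis_aux (∑ i, ProjKernel.wt (Rfam i)) k G Rfam
    (fun i c => hbound _ (hT_sub (hrange ▸ Set.mem_range_self i)) c)
    (by rw [hrange, hT_span]) le_rfl
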